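/- Suppose Z ⊊ Y ⊊ X (strict inclusions of nonempty sets). Then the semigroup T(X,Y,Z) is not regular: there exists α ∈ T(X,Y,Z) which is not regular. -/
import Mathlib

/-- If Z ⊊ Y ⊊ X (nonempty, strict) then T(X,Y,Z) is not regular. -/
theorem stmt_5 {X : Type*} (Y Z : Set X) (hZY : Z ⊂ Y) (hYX : Y ⊂ Set.univ)
    (hZ : Z.Nonempty) :
    ∃ α : X → X, α '' Y ⊆ Z ∧ ¬ ∃ β : X → X, β '' Y ⊆ Z ∧ α ∘ β ∘ α = α := by
  obtain ⟨z, hz⟩ := hZ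
  obtain ⟨y, hyY, hyZ⟩ := Set.exists_of_ssubset hZY
  obtain ⟨x0, _, hx0⟩ := Set.exists_of_ssubset hYX
  classical
  refine ⟨fun t => if t = x0 then y else z, ?_, ?_⟩
  · rintro _ ⟨t, ht, rfl⟩
    have : t ≠ x0 := fun h => hx0 (h ▸ ht)
    simp [this, hz]
  · rintro ⟨β, hβ, heq⟩
    have h2 := congrFun heq x0
    simp only [Function.comp, if_pos rfl] at h2
    have hβy : β y ∈ Z := hβ ⟨y, hyY, rfl⟩
    have hβyY : β y ∈ Y := hZY.1 hβy
    have : β y ≠ x0 := fun h => hx0 (h ▸ hβyY)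
    simp [this] at h2
    exact hyZ (h2 ▸ hz)
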